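/- Let f(q) = q·∏_{n≥1}(1+q^n)^{24} ∈ ℤ[[q]]. Define the formal operation sending f(q) to f(q)·f(-q) (computed in ℤ[[q]] after checking f(-q) makes sense). Then f(q)·f(-q) = -f(q^2). -/

import Mathlib

open PowerSeries Finset

/-- `f(q²)`: the power series obtained by substituting `q²` for `q`. -/
noncomputable def evalSq (f : PowerSeries ℤ) : PowerSeries ℤ :=
  PowerSeries.mk fun n => if n % 2 = 0 then coeff (n / 2) f else 0

lemma evalSq_coeff (f : PowerSeries ℤ) (n : ℕ) :
    coeff n (evalSq f) = if n % 2 = 0 then coeff (n / 2) f else 0 :=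
  coeff_mk _ _

lemma evalSq_mul (f g : PowerSeries ℤ) : evalSq (f * g) = evalSq f * evalSq g := by
  ext n
  rcases Nat.even_or_odd n with ⟨m, rfl⟩ | ⟨m, rfl⟩
  · rw [evalSq_coeff, if_pos (by omega : (m + m) % 2 = 0),
      (by omega : (m + m) / 2 = m), coeff_mul, coeff_mul]
    have hsub : (antidiagonal m).image (fun q : ℕ × ℕ => (2 * q.1, 2 * q.2)) ⊆
        antidiagonal (m + m) := by
      intro p hp
      simp only [mem_image, HasAntidiagonal.mem_antidiagonal] at hp ⊢
      obtain ⟨q, hq, rfl⟩ := hp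
      omega
    rw [← Finset.sum_subset hsub (by
      intro p hp hnot
      rw [HasAntidiagonal.mem_antidiagonal] at hp
      rw [evalSq_coeff, evalSq_coeff]
      by_cases h1 : p.1 % 2 = 0
      · by_cases h2' : p.2 % 2 = 0
        · exfalso
          apply hnot
          simp only [mem_image, HasAntidiagonal.mem_antidiagonal]
          refine ⟨(p.1 / 2, p.2 / 2), by omega, ?_⟩
          simp only [Prod.ext_iff]
          constructor <;> omega
        · rw [if_neg h2', mul_zero]
      · rw [if_neg h1, zero_mul])]
    rw [Finset.sum_image (by
      intro a _ b _ h
      simp only [Prod.ext_iff] at h ⊢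
      omega)]
    apply sum_congr rfl
    intro q _
    rw [evalSq_coeff, evalSq_coeff, if_pos (show 2 * q.1 % 2 = 0 by omega),
      if_pos (show 2 * q.2 % 2 = 0 by omega), (show 2 * q.1 / 2 = q.1 by omega),
      (show 2 * q.2 / 2 = q.2 by omega)]
  · rw [evalSq_coeff, if_neg (by omega), coeff_mul]
    symm
    apply Finset.sum_eq_zero
    intro p hp
    rw [HasAntidiagonal.mem_antidiagonal] at hp
    rw [evalSq_coeff, evalSq_coeff]
    by_cases h2 : p.2 % 2 = 0
    · rw [if_neg (show ¬ p.1 % 2 = 0 by omega), zero_mul]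
    · rw [if_neg h2, mul_zero]

lemma evalSq_one : evalSq (1 : PowerSeries ℤ) = 1 := by
  ext n
  rw [evalSq_coeff]
  simp only [coeff_one]
  split_ifs <;> omega

lemma evalSq_add (f g : PowerSeries ℤ) : evalSq (f + g) = evalSq f + evalSq g := by
  ext n
  rw [map_add, evalSq_coeff, evalSq_coeff, evalSq_coeff, map_add]
  split_ifs <;> simp

lemma evalSq_zero : evalSq (0 : PowerSeries ℤ) = 0 := by
  ext n
  rw [evalSq_coeff]
  simp

/-- `evalSq` as a ring hom. -/
noncomputable def evalSqHom : PowerSeries ℤ →+* PowerSeries ℤ where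
  toFun := evalSq
  map_one' := evalSq_one
  map_mul' := evalSq_mul
  map_zero' := evalSq_zero
  map_add' := evalSq_add

lemma evalSq_X : evalSq (X : PowerSeries ℤ) = X ^ 2 := by
  ext n
  rw [evalSq_coeff, coeff_X, coeff_X_pow]
  split_ifs <;> omega

noncomputable def AAp (N : ℕ) : PowerSeries ℤ :=
  ∏ k ∈ range N, ((1 + X ^ (k + 1)) * (1 + (-X) ^ (k + 1)))

noncomputable def BBp (N : ℕ) : PowerSeries ℤ :=
  ∏ k ∈ range N, (1 + (X : PowerSeries ℤ) ^ (2 * (k + 1)))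

noncomputable def PPp (N : ℕ) : PowerSeries ℤ :=
  ∏ k ∈ Ico (N / 2) N, (1 + (X : PowerSeries ℤ) ^ (2 * (k + 1)))

noncomputable def QQp (N : ℕ) : PowerSeries ℤ :=
  ∏ k ∈ Ico (N / 2) N, (1 - (X : PowerSeries ℤ) ^ (2 * (k + 1)))

lemma key_identity : ∀ N, AAp N * PPp N = BBp N * QQp N := by
  intro N
  induction N with
  | zero => simp [AAp, BBp, PPp, QQp]
  | succ N ih =>
    rw [AAp, BBp, prod_range_succ, prod_range_succ, ← AAp, ← BBp]
    rcases Nat.even_or_odd N with ⟨M, rfl⟩ | ⟨M, rfl⟩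
    · -- N = M + M even, N + 1 odd
      have hneg : (-X : PowerSeries ℤ) ^ (M + M + 1) = -(X ^ (M + M + 1)) :=
        Odd.neg_pow ⟨M, by ring⟩ _
      have hP1 : PPp (M + M + 1) = PPp (M + M) * (1 + X ^ (2 * (M + M + 1))) := by
        unfold PPp
        rw [(by omega : (M + M + 1) / 2 = (M + M) / 2)]
        exact prod_Ico_succ_top (by omega : (M + M) / 2 ≤ M + M) _
      have hQ1 : QQp (M + M + 1) = QQp (M + M) * (1 - X ^ (2 * (M + M + 1))) := by
        unfold QQp
        rw [(by omega : (M + M + 1) / 2 = (M + M) / 2)]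
        exact prod_Ico_succ_top (by omega : (M + M) / 2 ≤ M + M) _
      rw [hneg, hP1, hQ1]
      linear_combination
        ((1 - (X : PowerSeries ℤ) ^ (2 * (M + M + 1))) *
          (1 + (X : PowerSeries ℤ) ^ (2 * (M + M + 1)))) * ih
    · -- N = 2M + 1 odd, N + 1 even
      have hneg : (-X : PowerSeries ℤ) ^ (2 * M + 1 + 1) = X ^ (2 * M + 1 + 1) :=
        Even.neg_pow ⟨M + 1, by ring⟩ _
      have hP : PPp (2 * M + 1) = (1 + (X : PowerSeries ℤ) ^ (2 * (M + 1))) *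
          ∏ k ∈ Ico (M + 1) (2 * M + 1), (1 + (X : PowerSeries ℤ) ^ (2 * (k + 1))) := by
        unfold PPp
        rw [(by omega : (2 * M + 1) / 2 = M)]
        exact prod_eq_prod_Ico_succ_bot (by omega : M < 2 * M + 1) _
      have hQ : QQp (2 * M + 1) = (1 - (X : PowerSeries ℤ) ^ (2 * (M + 1))) *
          ∏ k ∈ Ico (M + 1) (2 * M + 1), (1 - (X : PowerSeries ℤ) ^ (2 * (k + 1))) := by
        unfold QQp
        rw [(by omega : (2 * M + 1) / 2 = M)]
        exact prod_eq_prod_Ico_succ_bot (by omega : M < 2 * M + 1) _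
      have hP' : PPp (2 * M + 1 + 1) =
          (∏ k ∈ Ico (M + 1) (2 * M + 1), (1 + (X : PowerSeries ℤ) ^ (2 * (k + 1)))) *
            (1 + X ^ (2 * (2 * M + 1 + 1))) := by
        unfold PPp
        rw [(by omega : (2 * M + 1 + 1) / 2 = M + 1)]
        exact prod_Ico_succ_top (by omega : M + 1 ≤ 2 * M + 1) _
      have hQ' : QQp (2 * M + 1 + 1) =
          (∏ k ∈ Ico (M + 1) (2 * M + 1), (1 - (X : PowerSeries ℤ) ^ (2 * (k + 1)))) *
            (1 - X ^ (2 * (2 * M + 1 + 1))) := by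
        unfold QQp
        rw [(by omega : (2 * M + 1 + 1) / 2 = M + 1)]
        exact prod_Ico_succ_top (by omega : M + 1 ≤ 2 * M + 1) _
      rw [hneg, hP', hQ']
      rw [hP, hQ] at ih
      linear_combination
        ((1 + (X : PowerSeries ℤ) ^ (2 * (M + 1))) *
          (1 + (X : PowerSeries ℤ) ^ (2 * (2 * M + 1 + 1)))) * ih

lemma prod_sub_one_dvd {m : ℕ} (s : Finset ℕ) (g : ℕ → PowerSeries ℤ) :
    (∀ k ∈ s, (X : PowerSeries ℤ) ^ m ∣ g k - 1) →
    (X : PowerSeries ℤ) ^ m ∣ (∏ k ∈ s, g k) - 1 := by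
  induction s using Finset.cons_induction with
  | empty => intro _; simp
  | cons a s ha ih =>
    intro h
    rw [prod_cons]
    have key : g a * (∏ k ∈ s, g k) - 1 =
        (g a - 1) * (∏ k ∈ s, g k) + ((∏ k ∈ s, g k) - 1) := by ring
    rw [key]
    exact dvd_add ((h a (mem_cons_self a s)).mul_right _)
      (ih fun k hk => h k (mem_cons_of_mem hk))

lemma dvd_AAp_sub_BBp (N : ℕ) : (X : PowerSeries ℤ) ^ (N + 1) ∣ AAp N - BBp N := by
  have hQP : (X : PowerSeries ℤ) ^ (N + 1) ∣ QQp N - PPp N := by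
    have h1 : (X : PowerSeries ℤ) ^ (N + 1) ∣ QQp N - 1 := by
      apply prod_sub_one_dvd
      intro k hk
      rw [mem_Ico] at hk
      have h : (1 - (X : PowerSeries ℤ) ^ (2 * (k + 1))) - 1 = -(X ^ (2 * (k + 1))) := by ring
      rw [h]
      exact dvd_neg.mpr (pow_dvd_pow X (by omega))
    have h2 : (X : PowerSeries ℤ) ^ (N + 1) ∣ PPp N - 1 := by
      apply prod_sub_one_dvd
      intro k hk
      rw [mem_Ico] at hk
      have h : (1 + (X : PowerSeries ℤ) ^ (2 * (k + 1))) - 1 = X ^ (2 * (k + 1)) := by ring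
      rw [h]
      exact pow_dvd_pow X (by omega)
    have h : QQp N - PPp N = (QQp N - 1) - (PPp N - 1) := by ring
    rw [h]
    exact dvd_sub h1 h2
  have hmul : PPp N * (AAp N - BBp N) = BBp N * (QQp N - PPp N) := by
    linear_combination key_identity N
  have hu : IsUnit (PPp N) := by
    rw [PowerSeries.isUnit_iff_constantCoeff]
    have h : constantCoeff (PPp N) = 1 := by
      rw [PPp, map_prod]
      apply Finset.prod_eq_one
      intro k _
      simp [constantCoeff_X, zero_pow (by omega : 2 * (k + 1) ≠ 0)]
    rw [h]
    exact isUnit_one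
  have hdvd : (X : PowerSeries ℤ) ^ (N + 1) ∣ PPp N * (AAp N - BBp N) := by
    rw [hmul]
    exact hQP.mul_left _
  obtain ⟨u, hu_eq⟩ := hu
  have h : AAp N - BBp N = ↑u⁻¹ * (PPp N * (AAp N - BBp N)) := by
    rw [← mul_assoc, ← hu_eq, Units.inv_mul, one_mul]
  rw [h]
  exact hdvd.mul_left _

/-- `f(q)·f(-q) = -f(q²)` for `f = q·∏(1+q^n)^24`; `f(-q)` is `rescale (-1) f`. -/
theorem f_mul_f_neg (f : PowerSeries ℤ)
    (hf : ∀ N, trunc N f =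
      trunc N ((X : PowerSeries ℤ) * ∏ n ∈ Finset.range N, (1 + X ^ (n + 1)) ^ 24)) :
    f * rescale (-1) f = -evalSq f := by
  ext n
  set N := n + 1 with hN
  set G : PowerSeries ℤ := X * ∏ k ∈ Finset.range N, (1 + X ^ (k + 1)) ^ 24 with hG
  have hcoe : ∀ i, i < N → coeff i f = coeff i G := by
    intro i hi
    have h := congrArg (fun p => Polynomial.coeff p i) (hf N)
    simpa only [coeff_trunc, if_pos hi] using h
  have hresc : rescale (-1 : ℤ) G = (-X) * ∏ k ∈ Finset.range N, (1 + (-X) ^ (k + 1)) ^ 24 := by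
    rw [hG, map_mul, rescale_neg_one_X, map_prod]
    congr 1
    apply Finset.prod_congr rfl
    intro k _
    rw [map_pow, map_add, map_one, map_pow, rescale_neg_one_X]
  have hAB : (AAp N) ^ 24 = (∏ k ∈ range N, (1 + (X : PowerSeries ℤ) ^ (k + 1)) ^ 24) *
      ∏ k ∈ range N, (1 + (-X : PowerSeries ℤ) ^ (k + 1)) ^ 24 := by
    rw [AAp, ← prod_pow, ← prod_mul_distrib]
    apply Finset.prod_congr rfl
    intro k _
    rw [mul_pow]
  have hG1 : G * rescale (-1 : ℤ) G = -(X ^ 2 * AAp N ^ 24) := by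
    rw [hresc, hG]
    linear_combination ((X : PowerSeries ℤ) ^ 2) * hAB
  have hG2 : evalSq G = X ^ 2 * BBp N ^ 24 := by
    rw [show evalSq G = evalSqHom G from rfl, hG, map_mul, map_prod,
      show evalSqHom (X : PowerSeries ℤ) = X ^ 2 from evalSq_X]
    congr 1
    rw [BBp, ← prod_pow]
    apply Finset.prod_congr rfl
    intro k _
    rw [map_pow, map_add, map_one, map_pow,
      show evalSqHom (X : PowerSeries ℤ) = X ^ 2 from evalSq_X, ← pow_mul]
  have E1 : coeff n (f * rescale (-1 : ℤ) f) = coeff n (G * rescale (-1 : ℤ) G) := by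
    rw [coeff_mul, coeff_mul]
    apply Finset.sum_congr rfl
    intro p hp
    rw [HasAntidiagonal.mem_antidiagonal] at hp
    rw [coeff_rescale, coeff_rescale, hcoe p.1 (by omega), hcoe p.2 (by omega)]
  have E2 : coeff n (evalSq f) = coeff n (evalSq G) := by
    rw [evalSq_coeff, evalSq_coeff]
    split_ifs with h
    · rw [hcoe (n / 2) (by omega)]
    · rfl
  have E3 : coeff n (G * rescale (-1 : ℤ) G) + coeff n (evalSq G) = 0 := by
    have h24 : (X : PowerSeries ℤ) ^ (N + 1) ∣ BBp N ^ 24 - AAp N ^ 24 := by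
      have h := (dvd_AAp_sub_BBp N).trans (sub_dvd_pow_sub_pow (AAp N) (BBp N) 24)
      have h2 : (X : PowerSeries ℤ) ^ (N + 1) ∣ -(AAp N ^ 24 - BBp N ^ 24) := dvd_neg.mpr h
      rwa [neg_sub] at h2
    have hdvd : (X : PowerSeries ℤ) ^ (n + 1) ∣ G * rescale (-1 : ℤ) G + evalSq G := by
      rw [hG1, hG2]
      have heq : -((X : PowerSeries ℤ) ^ 2 * AAp N ^ 24) + X ^ 2 * BBp N ^ 24 =
          X ^ 2 * (BBp N ^ 24 - AAp N ^ 24) := by ring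
      rw [heq]
      exact (pow_dvd_pow X (by omega : n + 1 ≤ N + 1)).trans (h24.mul_left _)
    rw [X_pow_dvd_iff] at hdvd
    have h := hdvd n (by omega)
    rwa [map_add] at h
  rw [map_neg, E1, E2]
  linarith [E3]
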